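/- Let F : (0, 1] → [0, ∞) be continuous and suppose there exist constants C₁, C₂ > 0 such that F(t) ≤ C₁ t for all t ∈ (0, 1] and F(t) ≤ C₂ t^2 + (1/3) t^3 ∫_t^1 s^{−4} F(s) ds for all t ∈ (0, 1]. Then there exists C₃ > 0 such that F(t) ≤ C₃ t^2 for all t ∈ (0, 1]. -/

import Mathlib

open MeasureTheory

/-- The absorption step: if `F : (0,1] → [0,∞)` is continuous, `F(t) ≤ C₁ t`, and
`F(t) ≤ C₂ t² + (1/3) t³ ∫_t^1 s⁻⁴ F(s) ds` for all `t ∈ (0,1]`, then there is `C₃ > 0`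
with `F(t) ≤ C₃ t²` on `(0,1]`. -/
theorem absorption_estimate (F : ℝ → ℝ)
    (hFc : ContinuousOn F (Set.Ioc (0 : ℝ) 1))
    (hF0 : ∀ t ∈ Set.Ioc (0 : ℝ) 1, 0 ≤ F t)
    (C₁ C₂ : ℝ) (hC₁ : 0 < C₁) (hC₂ : 0 < C₂)
    (h₁ : ∀ t ∈ Set.Ioc (0 : ℝ) 1, F t ≤ C₁ * t)
    (h₂ : ∀ t ∈ Set.Ioc (0 : ℝ) 1,
      F t ≤ C₂ * t ^ 2 + (1 / 3) * t ^ 3 * ∫ s in t..1, (s ^ 4)⁻¹ * F s) :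
    ∃ C₃ > 0, ∀ t ∈ Set.Ioc (0 : ℝ) 1, F t ≤ C₃ * t ^ 2 := by
  -- Key induction: F t ≤ C₁ * (1/6)^n * t + (3/2) * C₂ * t^2 for every n.
  have key : ∀ n : ℕ, ∀ t ∈ Set.Ioc (0 : ℝ) 1,
      F t ≤ C₁ * (1/6)^n * t + (3/2) * C₂ * t^2 := by
    intro n
    induction n with
    | zero =>
      intro t ht
      have := h₁ t ht
      nlinarith [sq_nonneg t, ht.1.le, hC₂.le]
    | succ n ih =>
      intro t ht
      obtain ⟨ht0, ht1⟩ := ht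
      set A : ℝ := C₁ * (1/6)^n with hA
      set B : ℝ := (3/2) * C₂ with hB
      have hA0 : 0 < A := by positivity
      have hB0 : 0 < B := by positivity
      have hsub : Set.uIcc t 1 ⊆ Set.Ioc (0 : ℝ) 1 := by
        rw [Set.uIcc_of_le ht1]
        exact fun s hs => ⟨lt_of_lt_of_le ht0 hs.1, hs.2⟩
      have hne : ∀ s ∈ Set.uIcc t 1, s ≠ 0 := fun s hs => (hsub hs).1.ne'
      have h0ni : (0 : ℝ) ∉ Set.uIcc t 1 := fun h0 => (hne 0 h0) rfl
      -- integrability of both integrands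
      have hIntF : IntervalIntegrable (fun s => (s ^ 4)⁻¹ * F s) volume t 1 := by
        apply ContinuousOn.intervalIntegrable
        exact (((continuous_pow 4).continuousOn.inv₀
          (fun s hs => pow_ne_zero _ (hne s hs))).mul (hFc.mono hsub))
      have hInt3 : IntervalIntegrable (fun s : ℝ => s ^ (-3 : ℤ)) volume t 1 :=
        intervalIntegral.intervalIntegrable_zpow (Or.inr h0ni)
      have hInt2 : IntervalIntegrable (fun s : ℝ => s ^ (-2 : ℤ)) volume t 1 :=
        intervalIntegral.intervalIntegrable_zpow (Or.inr h0ni)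
      have hIntG : IntervalIntegrable (fun s : ℝ => A * s ^ (-3 : ℤ) + B * s ^ (-2 : ℤ))
          volume t 1 := (hInt3.const_mul A).add (hInt2.const_mul B)
      -- pointwise bound on [t,1]
      have hmono : ∫ s in t..1, (s ^ 4)⁻¹ * F s
          ≤ ∫ s in t..1, (A * s ^ (-3 : ℤ) + B * s ^ (-2 : ℤ)) := by
        apply intervalIntegral.integral_mono_on ht1 hIntF hIntG
        intro s hs
        have hs' : s ∈ Set.Ioc (0 : ℝ) 1 := ⟨lt_of_lt_of_le ht0 hs.1, hs.2⟩
        have hs0 : 0 < s := hs'.1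
        have hFs := ih s hs'
        have h4 : (0:ℝ) < s ^ 4 := by positivity
        have : (s ^ 4)⁻¹ * F s ≤ (s ^ 4)⁻¹ * (A * s + B * s ^ 2) := by
          apply mul_le_mul_of_nonneg_left _ (by positivity)
          simpa [hA, hB] using hFs
        refine this.trans (le_of_eq ?_)
        rw [zpow_neg, zpow_neg, show ((3:ℤ)) = ((3:ℕ):ℤ) by norm_num,
          show ((2:ℤ)) = ((2:ℕ):ℤ) by norm_num, zpow_natCast, zpow_natCast]
        field_simp
      -- compute the right integral
      have hval : ∫ s in t..1, (A * s ^ (-3 : ℤ) + B * s ^ (-2 : ℤ))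
          = A * ((1 - (t^2)⁻¹) / (-2)) + B * ((1 - t⁻¹) / (-1)) := by
        rw [intervalIntegral.integral_add (hInt3.const_mul A) (hInt2.const_mul B),
          intervalIntegral.integral_const_mul, intervalIntegral.integral_const_mul,
          integral_zpow (Or.inr ⟨by decide, h0ni⟩), integral_zpow (Or.inr ⟨by decide, h0ni⟩)]
        norm_num [zpow_neg]
      have hmain := h₂ t ⟨ht0, ht1⟩
      have hint_le : ∫ s in t..1, (s ^ 4)⁻¹ * F s
          ≤ A * ((1 - (t^2)⁻¹) / (-2)) + B * ((1 - t⁻¹) / (-1)) := hval ▸ hmono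
      have ht0' : t ≠ 0 := ht0.ne'
      have hcube : (0:ℝ) < t ^ 3 := by positivity
      have step : F t ≤ C₂ * t^2 + (1/3) * t^3 *
          (A * ((1 - (t^2)⁻¹) / (-2)) + B * ((1 - t⁻¹) / (-1))) := by
        refine hmain.trans ?_
        have := mul_le_mul_of_nonneg_left hint_le (by positivity : (0:ℝ) ≤ (1/3) * t^3)
        linarith
      have hexp : (1/3) * t^3 * (A * ((1 - (t^2)⁻¹) / (-2)) + B * ((1 - t⁻¹) / (-1)))
          = A * t / 6 - A * t^3 / 6 + B * t^2 / 3 - B * t^3 / 3 := by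
        field_simp
        ring
      rw [hexp] at step
      have hAB : C₁ * (1/6)^(n+1) * t + (3/2) * C₂ * t^2
          = A / 6 * t + (C₂ + B / 3) * t^2 := by
        rw [hA, hB]; ring
      rw [hAB]
      nlinarith [pow_pos ht0 3, hA0.le, hB0.le]
  -- pass to the limit n → ∞
  refine ⟨(3/2) * C₂, by positivity, fun t ht => ?_⟩
  have hlim : Filter.Tendsto (fun n : ℕ => C₁ * (1/6)^n * t) Filter.atTop (nhds 0) := by
    have : Filter.Tendsto (fun n : ℕ => (1/6 : ℝ)^n) Filter.atTop (nhds 0) :=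
      tendsto_pow_atTop_nhds_zero_of_lt_one (by norm_num) (by norm_num)
    simpa using (this.const_mul C₁).mul_const t
  have hle : F t - (3/2) * C₂ * t^2 ≤ 0 := by
    refine ge_of_tendsto hlim (Filter.Eventually.of_forall fun n => ?_)
    have := key n t ht
    linarith
  linarith
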